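/- If s ≥ 2 and the stratum H_s^u(f) is at least one dimensional, then H_s^u(f) is compact and, moreover, the stratum H_s^{(d)}(f) labelled by the composition (d) is empty (so the lattice of strata of H_s^u(f) contains the empty stratum). -/

import Mathlib

noncomputable section

open Polynomial

/-- The set of partial sums `{u₁, u₁+u₂, …, d}` of a composition `u` of `d`. -/
def Composition.sums {d : ℕ} (u : Composition d) : Finset ℕ :=
  (Finset.range u.length).image fun i => u.sizeUpTo (i + 1)

/-- `CompLe v u` : the partial order on compositions of `d`; `v ≤ u` iff the set of
partial sums of `v` is contained in the set of partial sums of `u` (equivalently, `v` is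
obtained from `u` by merging blocks of consecutive parts into their sums). -/
def CompLe {d : ℕ} (v u : Composition d) : Prop := v.sums ⊆ u.sums

/-- A real univariate polynomial is hyperbolic if all of its roots are real, i.e. it has
`natDegree` many real roots counted with multiplicity. -/
def Hyperbolic (p : ℝ[X]) : Prop := p.roots.card = p.natDegree

/-- `HasComposition h u` : the composition `v(h)` of the hyperbolic polynomial `h`
(the tuple of multiplicities of its increasingly ordered distinct roots) equals `u`. -/
def HasComposition {d : ℕ} (h : ℝ[X]) (u : Composition d) : Prop :=
  ∃ a : Fin u.length → ℝ, StrictMono a ∧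
    h = ∏ i, (X - C (a i)) ^ u.blocksFun i

/-- `Hset d s f` is `H_s(f)` : the monic hyperbolic polynomials of degree `d` whose
coefficients `h_i = coeff (d-i)` agree with those of `f` for all `i ≤ s`. -/
def Hset (d s : ℕ) (f : ℝ[X]) : Set ℝ[X] :=
  {h | h.Monic ∧ h.natDegree = d ∧ Hyperbolic h ∧
    ∀ j, d - s ≤ j → h.coeff j = f.coeff j}

/-- `HSu d s f u` is the stratum `H_s^u(f) = {h ∈ H_s(f) | v(h) ≤ u}`. -/
def HSu (d s : ℕ) (f : ℝ[X]) (u : Composition d) : Set ℝ[X] :=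
  {h | h ∈ Hset d s f ∧ ∃ w : Composition d, CompLe w u ∧ HasComposition h w}

/-- The identification of `h ∈ H_s(f)` with `(h_{s+1}, …, h_d) ∈ ℝ^{d-s}` :
coordinate `i` is `h_{s+1+i}`, i.e. the coefficient of `t^{d-s-1-i}`. -/
def coeffVec (d s : ℕ) (h : ℝ[X]) : Fin (d - s) → ℝ :=
  fun i => h.coeff (d - s - 1 - i.val)

/-- The stratum `H_s^u(f)`, identified with a subset of `ℝ^{d-s}`. -/
def strataSet (d s : ℕ) (f : ℝ[X]) (u : Composition d) : Set (Fin (d - s) → ℝ) :=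
  coeffVec d s '' HSu d s f u

/-- `DimGe S n` : `S ⊆ ℝ^m` contains a nonempty relatively open subset which is
homeomorphic to an open subset of `ℝ^n`. -/
def DimGe {m : ℕ} (S : Set (Fin m → ℝ)) (n : ℕ) : Prop :=
  ∃ U : Set (Fin m → ℝ), U.Nonempty ∧ U ⊆ S ∧
    IsOpen {x : S | (x : Fin m → ℝ) ∈ U} ∧
    ∃ V : Set (Fin n → ℝ), IsOpen V ∧ Nonempty (U ≃ₜ V)

/-- `HasDim S n` : the dimension of `S` is `n ∈ ℤ`, i.e. `n` is the largest integer such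
that `S` contains a (relatively) open subset homeomorphic to an open subset of `ℝ^n`,
with the convention that the empty set has dimension `-1`. -/
def HasDim {m : ℕ} (S : Set (Fin m → ℝ)) (n : ℤ) : Prop :=
  (S = ∅ ∧ n = -1) ∨
    (0 ≤ n ∧ DimGe S n.toNat ∧ ∀ k : ℕ, DimGe S k → (k : ℤ) ≤ n)

/-! ### Auxiliary lemmas -/


/-- product of (X - r) over a multiset of reals -/
def Pms (R : Multiset ℝ) : ℝ[X] := (R.map fun r => X - C r).prod

lemma Pms_monic (R : Multiset ℝ) : (Pms R).Monic :=
  monic_multiset_prod_of_monic _ _ fun r _ => monic_X_sub_C r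

lemma Pms_zero : Pms 0 = 1 := by simp [Pms]

lemma Pms_cons (a : ℝ) (R : Multiset ℝ) : Pms (a ::ₘ R) = (X - C a) * Pms R := by
  simp [Pms]

lemma Pms_natDegree (R : Multiset ℝ) : (Pms R).natDegree = Multiset.card R := by
  induction R using Multiset.induction with
  | empty => simp [Pms_zero]
  | cons a R ih =>
    rw [Pms_cons, natDegree_mul (X_sub_C_ne_zero a) (Pms_monic R).ne_zero, ih]
    simp [natDegree_X_sub_C]
    ring

lemma Pms_roots (R : Multiset ℝ) : (Pms R).roots = R :=
  roots_multiset_prod_X_sub_C R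

lemma Pms_coeff_card (R : Multiset ℝ) : (Pms R).coeff (Multiset.card R) = 1 := by
  have := (Pms_monic R).coeff_natDegree
  rwa [Pms_natDegree] at this

lemma Pms_coeff_top (R : Multiset ℝ) (hc : 0 < Multiset.card R) :
    (Pms R).coeff (Multiset.card R - 1) = -R.sum := by
  induction R using Multiset.induction with
  | empty => simp at hc
  | cons a R ih =>
    rw [Pms_cons, mul_comm]
    rcases Nat.eq_zero_or_pos (Multiset.card R) with h0 | hpos
    · obtain rfl : R = 0 := Multiset.card_eq_zero.mp h0
      simp [Pms_zero]
    · have hcc : Multiset.card (a ::ₘ R) - 1 = (Multiset.card R - 1) + 1 := by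
        rw [Multiset.card_cons]; omega
      rw [hcc, coeff_mul_X_sub_C, ih hpos]
      have h2 : Multiset.card R - 1 + 1 = Multiset.card R := by omega
      rw [h2, Pms_coeff_card]
      simp [Multiset.sum_cons]
      ring

lemma Pms_coeff_sub2 (R : Multiset ℝ) (hc : 2 ≤ Multiset.card R) :
    (R.map (fun r => r^2)).sum = R.sum^2 - 2 * (Pms R).coeff (Multiset.card R - 2) := by
  induction R using Multiset.induction with
  | empty => simp at hc
  | cons a R ih =>
    rw [Multiset.card_cons] at hc ⊢
    rcases eq_or_lt_of_le hc with h2 | h3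
    · -- card R = 1
      obtain ⟨r, rfl⟩ := Multiset.card_eq_one.mp (by omega : Multiset.card R = 1)
      have : ({r} : Multiset ℝ) = r ::ₘ 0 := rfl
      rw [this, Pms_cons, Pms_cons, Pms_zero]
      simp [mul_coeff_zero]
      ring
    · have hR2 : 2 ≤ Multiset.card R := by omega
      have h1 : Multiset.card R + 1 - 2 = (Multiset.card R - 2) + 1 := by omega
      have h2 : Multiset.card R - 2 + 1 = Multiset.card R - 1 := by omega
      rw [Pms_cons, mul_comm (X - C a), h1, coeff_mul_X_sub_C, h2,
        Pms_coeff_top R (by omega)]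
      simp only [Multiset.map_cons, Multiset.sum_cons]
      rw [ih hR2]
      ring

lemma Pms_coeff_bound (B : ℝ) (hB : 0 ≤ B) :
    ∀ (R : Multiset ℝ), (∀ r ∈ R, |r| ≤ B) → ∀ j, |(Pms R).coeff j| ≤ (1 + B) ^ Multiset.card R := by
  intro R
  induction R using Multiset.induction with
  | empty =>
    intro _ j
    rw [Pms_zero, Multiset.card_zero, pow_zero, coeff_one]
    split <;> simp [abs_of_nonneg, abs_nonneg]
  | cons a R ih =>
    intro hmem j
    have ha : |a| ≤ B := hmem a (Multiset.mem_cons_self a R)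
    have ihm := ih (fun r hr => hmem r (Multiset.mem_cons_of_mem hr))
    rw [Pms_cons, mul_comm, Multiset.card_cons, pow_succ]
    have h1B : (0:ℝ) ≤ (1 + B) ^ Multiset.card R := pow_nonneg (by linarith) _
    rcases j with _ | k
    · rw [mul_coeff_zero]
      calc |(Pms R).coeff 0 * (X - C a).coeff 0| = |(Pms R).coeff 0| * |a| := by
            simp [abs_mul]
          _ ≤ (1 + B) ^ Multiset.card R * (1 + B) := by
            apply mul_le_mul (ihm 0) (by linarith) (abs_nonneg _) h1B
    · rw [coeff_mul_X_sub_C]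
      calc |(Pms R).coeff k - (Pms R).coeff (k + 1) * a|
          ≤ |(Pms R).coeff k| + |(Pms R).coeff (k+1)| * |a| := by
            rw [← abs_mul]; exact abs_sub _ _
        _ ≤ (1 + B) ^ Multiset.card R * 1 + (1 + B) ^ Multiset.card R * B := by
            gcongr
            · linarith [ihm k]
            · exact ihm (k+1)
        _ = (1 + B) ^ Multiset.card R * (1 + B) := by ring

lemma multiset_sum_nonneg_zero : ∀ (S : Multiset ℝ), (∀ x ∈ S, 0 ≤ x) → S.sum = 0 →
    ∀ x ∈ S, x = 0 := by
  intro S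
  induction S using Multiset.induction with
  | empty => simp
  | cons a S ih =>
    intro hnn hsum x hx
    rw [Multiset.sum_cons] at hsum
    have hSnn : 0 ≤ S.sum := Multiset.sum_nonneg fun y hy => hnn y (Multiset.mem_cons_of_mem hy)
    have ha : 0 ≤ a := hnn a (Multiset.mem_cons_self a S)
    have ha0 : a = 0 := by linarith
    rcases Multiset.mem_cons.mp hx with rfl | hx'
    · exact ha0
    · exact ih (fun y hy => hnn y (Multiset.mem_cons_of_mem hy)) (by linarith) x hx'

/-- Cauchy-Schwarz equality case -/
lemma eq_replicate_of_sum_sq (R : Multiset ℝ) (c : ℝ) (d : ℕ) (hcard : Multiset.card R = d)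
    (hsum : R.sum = d * c) (hsq : (R.map (fun r => r^2)).sum = d * c^2) :
    R = Multiset.replicate d c := by
  have key : (R.map (fun r => (r - c)^2)).sum = 0 := by
    have e1 : (R.map (fun r => (r - c)^2)).sum
        = (R.map (fun r => r^2)).sum - 2 * c * R.sum + (Multiset.card R) * c^2 := by
      have : ∀ r : ℝ, (r - c)^2 = r^2 + ((-2*c) * r + c^2) := by intro r; ring
      simp only [this]
      rw [Multiset.sum_map_add, Multiset.sum_map_add]
      have h2 : (R.map fun x => -2*c*x).sum = -2*c*R.sum := by
        rw [Multiset.sum_map_mul_left]; simp [Multiset.map_id']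
      rw [h2]
      simp [Multiset.map_const', Multiset.sum_replicate]
      ring
    rw [e1, hsum, hsq, hcard]
    ring
  have hall : ∀ r ∈ R, r = c := by
    intro r hr
    have := multiset_sum_nonneg_zero _ (fun x hx => by
      obtain ⟨y, hy, rfl⟩ := Multiset.mem_map.mp hx
      positivity) key ((r - c)^2) (Multiset.mem_map_of_mem _ hr)
    have : (r - c)^2 = 0 := this
    nlinarith [this]
  rw [Multiset.eq_replicate]
  exact ⟨hcard, hall⟩


lemma not_dimGe_of_subsingleton {m : ℕ} (S : Set (Fin m → ℝ)) (hS : S.Subsingleton)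
    (k : ℕ) (hk : 1 ≤ k) : ¬ DimGe S k := by
  rintro ⟨U, hUne, hUS, -, V, hVopen, ⟨e⟩⟩
  have hU : U.Subsingleton := hS.anti hUS
  have hVsub : V.Subsingleton := by
    intro x hx y hy
    have := hU (e.symm ⟨x, hx⟩).2 (e.symm ⟨y, hy⟩).2
    have h2 : e.symm ⟨x, hx⟩ = e.symm ⟨y, hy⟩ := Subtype.ext this
    have := congrArg e h2
    simp only [Homeomorph.apply_symm_apply] at this
    exact congrArg Subtype.val this
  obtain ⟨x, hxU⟩ := hUne
  obtain ⟨v, hv⟩ : V.Nonempty := ⟨e ⟨x, hxU⟩, (e ⟨x, hxU⟩).2⟩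
  have hVv : V = {v} := by
    apply Set.eq_singleton_iff_unique_mem.mpr ⟨hv, fun y hy => hVsub hy hv⟩
  rw [hVv] at hVopen
  -- {v} open in Fin k → ℝ, k ≥ 1 : contradiction via connectedness
  have hclopen : IsClopen ({v} : Set (Fin k → ℝ)) := ⟨isClosed_singleton, hVopen⟩
  rcases isClopen_iff.mp hclopen with h | h
  · exact Set.singleton_ne_empty v h
  · have : (v + fun _ => (1:ℝ)) ∈ ({v} : Set (Fin k → ℝ)) := h ▸ Set.mem_univ _
    have h1 : (v + fun _ => (1:ℝ)) = v := this
    have := congrFun h1 ⟨0, hk⟩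
    simp at this


lemma continuous_coeff_mul {α : Type*} [TopologicalSpace α] (p q : α → ℝ[X])
    (hp : ∀ j, Continuous fun a => (p a).coeff j) (hq : ∀ j, Continuous fun a => (q a).coeff j) :
    ∀ j, Continuous fun a => (p a * q a).coeff j := by
  intro j
  have : (fun a => (p a * q a).coeff j)
      = fun a => ∑ x ∈ Finset.HasAntidiagonal.antidiagonal j, (p a).coeff x.1 * (q a).coeff x.2 := by
    funext a; rw [coeff_mul]
  rw [this]
  exact continuous_finset_sum _ fun x _ => (hp x.1).mul (hq x.2)

lemma continuous_coeff_prod {ι α : Type*} [TopologicalSpace α] (s : Finset ι) (F : ι → α → ℝ[X])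
    (hF : ∀ i ∈ s, ∀ j, Continuous fun a => (F i a).coeff j) :
    ∀ j, Continuous fun a => (∏ i ∈ s, F i a).coeff j := by
  classical
  induction s using Finset.induction with
  | empty => intro j; simp only [Finset.prod_empty]; exact continuous_const
  | insert b t hnot ih =>
    intro j
    have : (fun a => (∏ i ∈ insert b t, F i a).coeff j)
        = fun a => (F b a * ∏ i ∈ t, F i a).coeff j := by
      funext a; rw [Finset.prod_insert hnot]
    rw [this]
    exact continuous_coeff_mul _ _ (hF b (Finset.mem_insert_self b t))
      (ih (fun i hi => hF i (Finset.mem_insert_of_mem hi))) j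

lemma continuous_coeff_pow {α : Type*} [TopologicalSpace α] (p : α → ℝ[X])
    (hp : ∀ j, Continuous fun a => (p a).coeff j) (m : ℕ) :
    ∀ j, Continuous fun a => ((p a) ^ m).coeff j := by
  induction m with
  | zero => intro j; simp only [pow_zero]; exact continuous_const
  | succ m ih =>
    intro j
    have : (fun a => ((p a) ^ (m+1)).coeff j) = fun a => ((p a)^m * p a).coeff j := by
      funext a; rw [pow_succ]
    rw [this]
    exact continuous_coeff_mul _ _ ih hp j

lemma continuous_coeff_X_sub_C {α : Type*} [TopologicalSpace α] (g : α → ℝ)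
    (hg : Continuous g) : ∀ j, Continuous fun a => (X - C (g a)).coeff j := by
  intro j
  have : (fun a => (X - C (g a)).coeff j)
      = fun a => (X : ℝ[X]).coeff j - (if j = 0 then g a else 0) := by
    funext a
    rw [coeff_sub, coeff_C]
  rw [this]
  rcases eq_or_ne j 0 with rfl | hj
  · simp only [if_pos rfl]; exact continuous_const.sub hg
  · simp only [if_neg hj]; exact continuous_const.sub continuous_const

lemma continuous_coeff_psi (L : ℕ) (m : Fin L → ℕ) (j : ℕ) :
    Continuous fun c : Fin L → ℝ => (∏ i, (X - C (c i)) ^ m i).coeff j := by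
  apply continuous_coeff_prod
  intro i _ j'
  exact continuous_coeff_pow _ (continuous_coeff_X_sub_C _ (continuous_apply i)) (m i) j'


/-- Group adjacent blocks with equal roots. -/
def grp : List (ℕ × ℝ) → List (ℕ × ℝ)
  | [] => []
  | [p] => [p]
  | p :: q :: t => if p.2 = q.2 then grp ((p.1 + q.1, p.2) :: t) else p :: grp (q :: t)
termination_by l => l.length

def Pl (l : List (ℕ × ℝ)) : ℝ[X] := (l.map fun p => (X - C p.2) ^ p.1).prod

lemma grp_prod : ∀ l : List (ℕ × ℝ), Pl (grp l) = Pl l := by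
  intro l
  induction l using grp.induct with
  | case1 => rw [grp]
  | case2 p => rw [grp]
  | case3 p q t heq ih =>
    rw [grp, if_pos heq, ih]
    simp only [Pl, List.map_cons, List.prod_cons]
    rw [pow_add, heq, mul_assoc]
  | case4 p q t hne ih =>
    rw [grp, if_neg hne]
    simp only [Pl, List.map_cons, List.prod_cons] at ih ⊢
    rw [ih]

lemma grp_pos : ∀ l : List (ℕ × ℝ), (∀ p ∈ l, 0 < p.1) → ∀ p ∈ grp l, 0 < p.1 := by
  intro l
  induction l using grp.induct with
  | case1 => intro h p hp; rw [grp] at hp; exact absurd hp List.not_mem_nil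
  | case2 q => intro h p hp; rw [grp] at hp; exact h p hp
  | case3 p q t heq ih =>
    intro h r hr
    rw [grp, if_pos heq] at hr
    refine ih ?_ r hr
    intro x hx
    rcases List.mem_cons.mp hx with rfl | hx'
    · have := h p (by simp); have := h q (by simp); simp; omega
    · exact h x (by simp [hx'])
  | case4 p q t hne ih =>
    intro h r hr
    rw [grp, if_neg hne] at hr
    rcases List.mem_cons.mp hr with rfl | hr'
    · exact h r (by simp)
    · exact ih (fun x hx => h x (List.mem_cons_of_mem p hx)) r hr'

lemma grp_sum : ∀ l : List (ℕ × ℝ), ((grp l).map Prod.fst).sum = (l.map Prod.fst).sum := by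
  intro l
  induction l using grp.induct with
  | case1 => rw [grp]
  | case2 q => rw [grp]
  | case3 p q t heq ih => rw [grp, if_pos heq, ih]; simp; omega
  | case4 p q t hne ih => rw [grp, if_neg hne]; simp at ih ⊢; omega

lemma grp_snd_mem : ∀ l : List (ℕ × ℝ), ∀ x ∈ grp l, x.2 ∈ l.map Prod.snd := by
  intro l
  induction l using grp.induct with
  | case1 => intro x hx; rw [grp] at hx; exact absurd hx List.not_mem_nil
  | case2 q => intro x hx; rw [grp] at hx; simp at hx; simp [hx]
  | case3 p q t heq ih =>
    intro x hx
    rw [grp, if_pos heq] at hx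
    have := ih x hx
    simp at this ⊢
    rcases this with h | h
    · left; exact h
    · right; right; exact h
  | case4 p q t hne ih =>
    intro x hx
    rw [grp, if_neg hne] at hx
    rcases List.mem_cons.mp hx with rfl | hx'
    · simp
    · have := ih x hx'
      simp at this ⊢
      tauto

lemma grp_sorted : ∀ l : List (ℕ × ℝ), (l.map Prod.snd).Pairwise (· ≤ ·) →
    ((grp l).map Prod.snd).Pairwise (· < ·) := by
  intro l
  induction l using grp.induct with
  | case1 => intro _; rw [grp]; simp
  | case2 q => intro _; rw [grp]; simp
  | case3 p q t heq ih =>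
    intro hs
    rw [grp, if_pos heq]
    apply ih
    simp only [List.map_cons, List.pairwise_cons] at hs ⊢
    exact ⟨fun b hb => hs.1 b (List.mem_cons_of_mem _ hb), hs.2.2⟩
  | case4 p q t hne ih =>
    intro hs
    rw [grp, if_neg hne]
    simp only [List.map_cons, List.pairwise_cons] at hs
    have hpq : p.2 < q.2 := lt_of_le_of_ne (hs.1 q.2 (by simp)) hne
    simp only [List.map_cons, List.pairwise_cons]
    constructor
    · intro b hb
      obtain ⟨x, hx, rfl⟩ := List.mem_map.mp hb
      have hmem : x.2 ∈ (q :: t).map Prod.snd := grp_snd_mem _ x hx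
      rw [List.map_cons] at hmem
      rcases List.mem_cons.mp hmem with h | h
      · rw [h]; exact hpq
      · exact lt_of_lt_of_le hpq (hs.2.1 x.2 h)
    · apply ih
      simp only [List.map_cons, List.pairwise_cons]
      exact hs.2

lemma grp_psums : ∀ l : List (ℕ × ℝ), ∀ i, i < (grp l).length →
    ∃ j, j < l.length ∧
      ((l.map Prod.fst).take (j+1)).sum = (((grp l).map Prod.fst).take (i+1)).sum := by
  intro l
  induction l using grp.induct with
  | case1 => intro i hi; rw [grp] at hi; simp at hi
  | case2 p =>
    intro i hi
    rw [grp] at hi ⊢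
    simp at hi
    subst hi
    exact ⟨0, by simp, rfl⟩
  | case3 p q t heq ih =>
    intro i hi
    rw [grp, if_pos heq] at hi ⊢
    obtain ⟨j, hj, hsum⟩ := ih i hi
    refine ⟨j + 1, by simpa using Nat.succ_lt_succ hj, ?_⟩
    rw [← hsum]
    simp only [List.map_cons, List.take_succ_cons, List.sum_cons]
    omega
  | case4 p q t hne ih =>
    intro i hi
    rw [grp, if_neg hne] at hi ⊢
    rcases i with _ | i'
    · exact ⟨0, by simp, by simp⟩
    · rw [List.length_cons] at hi
      obtain ⟨j, hj, hsum⟩ := ih i' (Nat.lt_of_succ_lt_succ hi)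
      refine ⟨j + 1, by simpa using Nat.succ_lt_succ hj, ?_⟩
      simp only [List.map_cons, List.take_succ_cons, List.sum_cons] at hsum ⊢
      omega


lemma mem_sums_iff {d : ℕ} (u : Composition d) (n : ℕ) :
    n ∈ u.sums ↔ ∃ i, i < u.length ∧ (u.blocks.take (i+1)).sum = n := by
  simp only [Composition.sums, Finset.mem_image, Finset.mem_range]
  rfl

lemma merge_exists {d : ℕ} (w : Composition d) (b : Fin w.length → ℝ) (hb : Monotone b) :
    ∃ w' : Composition d, CompLe w' w ∧ ∃ c : Fin w'.length → ℝ, StrictMono c ∧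
      ∏ i, (X - C (b i)) ^ w.blocksFun i = ∏ j, (X - C (c j)) ^ w'.blocksFun j := by
  classical
  set l : List (ℕ × ℝ) := List.ofFn (fun i : Fin w.length => (w.blocksFun i, b i)) with hl
  have hlfst : l.map Prod.fst = w.blocks := by
    rw [hl, List.map_ofFn]
    exact w.ofFn_blocksFun
  have hlsnd : l.map Prod.snd = List.ofFn b := by rw [hl, List.map_ofFn]; rfl
  set l' := grp l with hl'
  have hpos : ∀ p ∈ l', 0 < p.1 := by
    apply grp_pos
    intro p hp
    rw [hl] at hp
    obtain ⟨i, hi⟩ := List.mem_ofFn.mp hp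
    rw [← hi]
    exact w.one_le_blocksFun i
  have hsum : (l'.map Prod.fst).sum = d := by
    rw [hl', grp_sum, hlfst, w.blocks_sum]
  set w' : Composition d := ⟨l'.map Prod.fst, fun {i} hi => by
      obtain ⟨p, hp, rfl⟩ := List.mem_map.mp hi; exact hpos p hp, hsum⟩ with hw'
  have hlen : w'.length = l'.length := List.length_map _
  have hsorted : (l'.map Prod.snd).Pairwise (· < ·) := by
    apply grp_sorted
    rw [hlsnd]
    exact hb.sortedLE_ofFn.pairwise
  refine ⟨w', ?_, fun j => (l'.get (j.cast hlen)).2, ?_, ?_⟩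
  · -- CompLe w' w
    intro n hn
    rw [mem_sums_iff] at hn ⊢
    obtain ⟨i, hi, hsum_i⟩ := hn
    have hi' : i < l'.length := by rwa [← hlen]
    obtain ⟨j, hj, hjs⟩ := grp_psums l i hi'
    refine ⟨j, ?_, ?_⟩
    · show j < w.blocks.length
      rw [← hlfst, List.length_map]
      exact hj
    · rw [← hlfst, hjs, ← hsum_i]
  · -- StrictMono c
    intro j j' hjj
    have hj1 : (j : ℕ) < (l'.map Prod.snd).length := by
      rw [List.length_map]; exact hlen ▸ j.2
    have hj2 : (j' : ℕ) < (l'.map Prod.snd).length := by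
      rw [List.length_map]; exact hlen ▸ j'.2
    have hrel := hsorted.rel_get_of_lt
      (show (⟨j, hj1⟩ : Fin (l'.map Prod.snd).length) < ⟨j', hj2⟩ from hjj)
    simpa [List.get_eq_getElem, List.getElem_map] using hrel
  · -- product equality
    have h1 : ∏ i, (X - C (b i)) ^ w.blocksFun i = Pl l := by
      rw [Pl, hl, List.map_ofFn, List.prod_ofFn]
      rfl
    have h2 : ∏ j, (X - C ((l'.get (j.cast hlen)).2)) ^ w'.blocksFun j = Pl l' := by
      rw [Pl]
      have : l'.map (fun p => (X - C p.2) ^ p.1)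
          = List.ofFn fun k : Fin l'.length => (X - C ((l'.get k).2)) ^ (l'.get k).1 := by
        conv_lhs => rw [← List.ofFn_get l', List.map_ofFn]
        rfl
      rw [this, List.prod_ofFn]
      apply Finset.prod_equiv (finCongr hlen)
      · simp
      · intro j _
        congr 1
        show w'.blocks.get j = (l'.get (j.cast hlen)).1
        have hwb : w'.blocks = l'.map Prod.fst := rfl
        simp [hwb, List.get_eq_getElem, List.getElem_map]
    rw [h1, h2, hl', grp_prod]


lemma Pms_replicate (m : ℕ) (c : ℝ) : Pms (Multiset.replicate m c) = (X - C c) ^ m := by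
  rw [Pms, Multiset.map_replicate, Multiset.prod_replicate]

lemma hset_eq_Pms {d s : ℕ} {f h : ℝ[X]} (hh : h ∈ Hset d s f) :
    h = Pms h.roots ∧ Multiset.card h.roots = d := by
  obtain ⟨hm, hdeg, hhyp, _⟩ := hh
  have hcard : Multiset.card h.roots = d := by rw [Hyperbolic] at hhyp; rw [hhyp, hdeg]
  exact ⟨(prod_multiset_X_sub_C_of_monic_of_roots_card_eq hm
    (by rw [Hyperbolic] at hhyp; exact hhyp)).symm, hcard⟩

lemma hset_sums {d s : ℕ} {f h : ℝ[X]} (hd2 : 2 ≤ d) (hs2 : 2 ≤ s) (hsd : s ≤ d)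
    (hh : h ∈ Hset d s f) :
    h.roots.sum = -f.coeff (d - 1) ∧
      (h.roots.map (fun r => r^2)).sum = f.coeff (d-1)^2 - 2 * f.coeff (d-2) := by
  obtain ⟨hP, hcard⟩ := hset_eq_Pms hh
  obtain ⟨-, -, -, hco⟩ := hh
  have h1 : h.coeff (d - 1) = f.coeff (d - 1) := hco _ (by omega)
  have h2 : h.coeff (d - 2) = f.coeff (d - 2) := hco _ (by omega)
  have e1 : h.roots.sum = -f.coeff (d-1) := by
    have := Pms_coeff_top h.roots (by omega)
    rw [← hP, hcard, h1] at this
    linarith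
  refine ⟨e1, ?_⟩
  have := Pms_coeff_sub2 h.roots (by omega)
  rw [← hP, hcard, h2, e1] at this
  rw [this]
  ring

lemma hset_subsingleton_of_single {d s : ℕ} (hd : 0 < d) (hs2 : 2 ≤ s) (hsd : s ≤ d)
    {f g : ℝ[X]} (hg : g ∈ HSu d s f (Composition.single d hd)) :
    (Hset d s f).Subsingleton := by
  have hd2 : 2 ≤ d := le_trans hs2 hsd
  obtain ⟨hgH, w, hle, a, ha, hprod⟩ := hg
  -- w = single d
  have hwlen : 0 < w.length := w.length_pos_of_pos hd
  have hmem : w.sizeUpTo 1 ∈ w.sums := by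
    rw [mem_sums_iff]
    exact ⟨0, hwlen, rfl⟩
  have hb : (Composition.single d hd).blocks = [d] := Composition.single_blocks hd
  have hsingle : (Composition.single d hd).sums = {d} := by
    ext n
    rw [mem_sums_iff, Finset.mem_singleton]
    constructor
    · rintro ⟨i, hi, hsv⟩
      rw [hb] at hsv
      simp [List.take_succ_cons] at hsv
      omega
    · rintro rfl
      refine ⟨0, ?_, ?_⟩
      · exact (Composition.single _ hd).length_pos_of_pos hd
      · rw [hb]; simp
  have hfirst : w.blocksFun ⟨0, hwlen⟩ = d := by
    have := hle hmem
    rw [hsingle, Finset.mem_singleton] at this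
    have h1 : w.sizeUpTo 1 = w.blocksFun ⟨0, hwlen⟩ := by
      rw [show (1:ℕ) = 0 + 1 from rfl, Composition.sizeUpTo_succ _ hwlen]
      simp [Composition.sizeUpTo, Composition.blocksFun, List.get_eq_getElem]
    rw [h1] at this
    exact this
  have hlen1 : w.length = 1 := by
    by_contra hne
    have h2 : 2 ≤ w.length := by omega
    have hlt : w.blocksFun ⟨0, hwlen⟩ < ∑ i, w.blocksFun i :=
      Finset.single_lt_sum (i := (⟨0, hwlen⟩ : Fin w.length)) (j := ⟨1, by omega⟩)
        (by simp) (Finset.mem_univ _) (Finset.mem_univ _)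
        (w.blocks_pos' 1 (by omega))
        (fun k _ _ => Nat.zero_le _)
    rw [w.sum_blocksFun, hfirst] at hlt
    omega
  -- g = (X - C c)^d
  set c := a ⟨0, hwlen⟩ with hc
  have hg_eq : g = (X - C c) ^ d := by
    rw [hprod]
    rw [show (Finset.univ : Finset (Fin w.length)) = {⟨0, hwlen⟩} from by
      ext i
      simp [Fin.ext_iff]
      omega]
    rw [Finset.prod_singleton, hfirst]
  -- sums for f via g
  have hgroots : g.roots = Multiset.replicate d c := by
    rw [hg_eq, ← Pms_replicate, Pms, roots_multiset_prod_X_sub_C]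
  obtain ⟨hgsum, hgsq⟩ := hset_sums hd2 hs2 hsd hgH
  rw [hgroots] at hgsum hgsq
  rw [Multiset.sum_replicate, nsmul_eq_mul] at hgsum
  rw [Multiset.map_replicate, Multiset.sum_replicate, nsmul_eq_mul] at hgsq
  -- any member of Hset equals Pms (replicate d c)
  intro h1 hmem1 h2 hmem2
  have key : ∀ h ∈ Hset d s f, h = Pms (Multiset.replicate d c) := by
    intro h hh
    obtain ⟨hP, hcard⟩ := hset_eq_Pms hh
    obtain ⟨hsum, hsq⟩ := hset_sums hd2 hs2 hsd hh
    have : h.roots = Multiset.replicate d c := by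
      apply eq_replicate_of_sum_sq _ _ _ hcard
      · rw [hsum, ← hgsum]
      · rw [hsq, ← hgsq]
    rw [hP, this]
  rw [key h1 hmem1, key h2 hmem2]
lemma Pms_add (S T : Multiset ℝ) : Pms (S + T) = Pms S * Pms T := by
  rw [Pms, Pms, Pms, Multiset.map_add, Multiset.prod_add]

lemma Pms_finsum {ι : Type*} (s : Finset ι) (R : ι → Multiset ℝ) :
    Pms (∑ i ∈ s, R i) = ∏ i ∈ s, Pms (R i) := by
  classical
  induction s using Finset.induction with
  | empty => simp [Pms_zero]
  | insert a t hnot ih =>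
    rw [Finset.sum_insert hnot, Finset.prod_insert hnot, Pms_add, ih]

lemma multiset_card_finsum {ι : Type*} (s : Finset ι) (R : ι → Multiset ℝ) :
    Multiset.card (∑ i ∈ s, R i) = ∑ i ∈ s, Multiset.card (R i) := by
  classical
  induction s using Finset.induction with
  | empty => simp
  | insert a t hnot ih =>
    rw [Finset.sum_insert hnot, Finset.sum_insert hnot, Multiset.card_add, ih]

lemma prod_pow_eq_Pms (L : ℕ) (m : Fin L → ℕ) (c : Fin L → ℝ) :
    ∏ i, (X - C (c i)) ^ m i = Pms (∑ i, Multiset.replicate (m i) (c i)) := by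
  rw [Pms_finsum]
  exact Finset.prod_congr rfl fun i _ => (Pms_replicate _ _).symm

lemma mem_le_sum_of_nonneg (S : Multiset ℝ) (h : ∀ x ∈ S, 0 ≤ x) {r : ℝ} (hr : r ∈ S) :
    r ≤ S.sum := by
  obtain ⟨S', rfl⟩ := Multiset.exists_cons_of_mem hr
  rw [Multiset.sum_cons]
  have := Multiset.sum_nonneg (fun y hy => h y (Multiset.mem_cons_of_mem hy))
  linarith

lemma hset_root_bound {d s : ℕ} {f : ℝ[X]} (hd2 : 2 ≤ d) (hs2 : 2 ≤ s) (hsd : s ≤ d)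
    {h : ℝ[X]} (hh : h ∈ Hset d s f) {r : ℝ} (hr : r ∈ h.roots) :
    |r| ≤ Real.sqrt (f.coeff (d-1)^2 - 2*f.coeff (d-2)) := by
  obtain ⟨-, hsq⟩ := hset_sums hd2 hs2 hsd hh
  have h1 : r^2 ≤ (h.roots.map (fun r => r^2)).sum :=
    mem_le_sum_of_nonneg _ (fun x hx => by
      obtain ⟨y, -, rfl⟩ := Multiset.mem_map.mp hx; positivity)
      (Multiset.mem_map_of_mem _ hr)
  rw [hsq] at h1
  calc |r| = Real.sqrt (r^2) := (Real.sqrt_sq_eq_abs r).symm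
    _ ≤ _ := Real.sqrt_le_sqrt h1

lemma hset_coeff_bound {d s : ℕ} {f : ℝ[X]} (hd2 : 2 ≤ d) (hs2 : 2 ≤ s) (hsd : s ≤ d)
    {h : ℝ[X]} (hh : h ∈ Hset d s f) (j : ℕ) :
    |h.coeff j| ≤ (1 + Real.sqrt (f.coeff (d-1)^2 - 2*f.coeff (d-2)))^d := by
  obtain ⟨hP, hcard⟩ := hset_eq_Pms hh
  have := Pms_coeff_bound _ (Real.sqrt_nonneg _) h.roots
    (fun r hr => hset_root_bound hd2 hs2 hsd hh hr) j
  rwa [← hP, hcard] at this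

/-- If `s ≥ 2` and the stratum `H_s^u(f)` is at least one dimensional, then `H_s^u(f)` is
compact and, moreover, the stratum `H_s^{(d)}(f)` labelled by the single-part composition
`(d)` is empty (so the lattice of strata of `H_s^u(f)` contains the empty stratum). -/
theorem stratum_compact_and_single_empty (d s : ℕ) (hd : 0 < d) (hsd : s ≤ d)
    (f : ℝ[X]) (hmon : f.Monic) (hdeg : f.natDegree = d) (hhyp : Hyperbolic f)
    (hs2 : 2 ≤ s) (u : Composition d)
    (hdim : ∃ n : ℤ, 1 ≤ n ∧ HasDim (strataSet d s f u) n) :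
    IsCompact (strataSet d s f u) ∧ HSu d s f (Composition.single d hd) = ∅ := by
  have hd2 : 2 ≤ d := hs2.trans hsd
  set B := Real.sqrt (f.coeff (d-1)^2 - 2*f.coeff (d-2)) with hB
  have hB0 : 0 ≤ B := Real.sqrt_nonneg _
  constructor
  · -- compactness
    have hsubset : strataSet d s f u ⊆ Metric.closedBall 0 ((1+B)^d) := by
      rintro x ⟨h, hhH, rfl⟩
      rw [Metric.mem_closedBall, dist_zero_right,
        pi_norm_le_iff_of_nonneg (by positivity)]
      intro i
      rw [Real.norm_eq_abs]
      exact hset_coeff_bound hd2 hs2 hsd hhH.1 _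
    have hclosed : IsClosed (strataSet d s f u) := by
      apply IsSeqClosed.isClosed
      intro xs x hxs hxt
      choose h hmem hcv using hxs
      choose w hwle hcomp using fun n => (hmem n).2
      obtain ⟨W, hWinf⟩ := Finite.exists_infinite_fiber w
      have hinf : {n | w n = W}.Infinite := Set.infinite_coe_iff.mp hWinf
      obtain ⟨φ, hφmono, hφ⟩ := Filter.extraction_of_frequently_atTop
        (Nat.frequently_atTop_iff_infinite.mpr hinf)
      have hWle : CompLe W u := by rw [← hφ 0]; exact hwle (φ 0)
      have hcompW : ∀ k, HasComposition (h (φ k)) W := fun k => hφ k ▸ hcomp (φ k)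
      choose b hbS hbprod using hcompW
      have hbball : ∀ k, b k ∈ Metric.closedBall (0 : Fin W.length → ℝ) B := by
        intro k
        rw [Metric.mem_closedBall, dist_zero_right, pi_norm_le_iff_of_nonneg hB0]
        intro i
        rw [Real.norm_eq_abs]
        have hroot : (b k i) ∈ (h (φ k)).roots := by
          rw [mem_roots ((hmem (φ k)).1.1.ne_zero)]
          rw [hbprod k, IsRoot.def, eval_prod]
          apply Finset.prod_eq_zero (Finset.mem_univ i)
          rw [eval_pow, eval_sub, eval_X, eval_C, sub_self]
          exact zero_pow (Nat.one_le_iff_ne_zero.mp (W.one_le_blocksFun i))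
        exact hset_root_bound hd2 hs2 hsd (hmem (φ k)).1 hroot
      obtain ⟨β, hβball, ψ, hψmono, hψtend⟩ :=
        (isCompact_closedBall (0 : Fin W.length → ℝ) B).tendsto_subseq hbball
      have hβmono : Monotone β := by
        intro i j hij
        exact le_of_tendsto_of_tendsto' ((tendsto_pi_nhds.mp hψtend) i)
          ((tendsto_pi_nhds.mp hψtend) j) (fun k => (hbS (ψ k)).monotone hij)
      set g : ℝ[X] := ∏ i, (X - C (β i)) ^ W.blocksFun i with hg
      have hcoefft : ∀ j, Filter.Tendsto (fun k => (h (φ (ψ k))).coeff j)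
          Filter.atTop (nhds (g.coeff j)) := by
        intro j
        have hcont := continuous_coeff_psi W.length W.blocksFun j
        have h0 := (hcont.tendsto β).comp hψtend
        apply Filter.Tendsto.congr (fun k => ?_) h0
        rw [hbprod (ψ k)]
        rfl
      have hgP : g = Pms (∑ i, Multiset.replicate (W.blocksFun i) (β i)) :=
        prod_pow_eq_Pms _ _ _
      have hgcard : Multiset.card (∑ i, Multiset.replicate (W.blocksFun i) (β i)) = d := by
        rw [multiset_card_finsum]
        simp only [Multiset.card_replicate]
        exact W.sum_blocksFun
      have hgmonic : g.Monic := hgP ▸ Pms_monic _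
      have hgdeg : g.natDegree = d := by rw [hgP, Pms_natDegree, hgcard]
      have hghyp : Hyperbolic g := by
        rw [Hyperbolic, hgP, Pms_roots, hgcard, Pms_natDegree, hgcard]
      have hgcoeff : ∀ j, d - s ≤ j → g.coeff j = f.coeff j := by
        intro j hj
        have h1 : (fun k => (h (φ (ψ k))).coeff j) = fun _ => f.coeff j :=
          funext fun k => (hmem _).1.2.2.2 j hj
        exact tendsto_nhds_unique (hcoefft j) (h1 ▸ tendsto_const_nhds)
      have hcvg : coeffVec d s g = x := by
        funext i
        have h1 : Filter.Tendsto (fun k => xs (φ (ψ k)) i) Filter.atTop (nhds (x i)) :=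
          ((tendsto_pi_nhds.mp hxt) i).comp ((hφmono.comp hψmono).tendsto_atTop)
        have h2 : (fun k => xs (φ (ψ k)) i)
            = fun k => (h (φ (ψ k))).coeff (d - s - 1 - i.val) :=
          funext fun k => by rw [← hcv (φ (ψ k))]; rfl
        rw [h2] at h1
        exact tendsto_nhds_unique (hcoefft _) h1
      obtain ⟨w', hw'le, c, hcS, hceq⟩ := merge_exists W β hβmono
      exact ⟨g, ⟨⟨hgmonic, hgdeg, hghyp, hgcoeff⟩, w',
        Finset.Subset.trans hw'le hWle, ⟨c, hcS, hceq⟩⟩, hcvg⟩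
    exact (isCompact_closedBall _ _).of_isClosed_subset hclosed hsubset
  · -- the single stratum is empty
    rcases Set.eq_empty_or_nonempty (HSu d s f (Composition.single d hd)) with he | ⟨g, hg⟩
    · exact he
    · exfalso
      have hsub := hset_subsingleton_of_single hd hs2 hsd hg
      have hsubS : (strataSet d s f u).Subsingleton :=
        (hsub.anti (fun p hp => hp.1)).image _
      obtain ⟨n, hn1, hdimn⟩ := hdim
      rcases hdimn with ⟨-, hn⟩ | ⟨-, hDim, -⟩
      · omega
      · exact not_dimGe_of_subsingleton _ hsubS n.toNat (by omega) hDim
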